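/- Let k > 0 and let (a_p)_{p≥0} be a sequence of complex numbers satisfying |a_p| ≤ P₁·exp(-P₂·p^(k/(k+1))) for constants P₁, P₂ > 0. For n ≥ 1 define the polynomial P_n(z) := Σ over integers p with 2^(-(k+1)/k)·n^((k+1)/k) ≤ p < 2^(-(k+1)/k)·(n+1)^((k+1)/k) of a_p·z^p. Then there exist constants C > 0 and 0 < δ < 1 such that for all n ≥ 1: sup over |z| ≤ 1 + (P₂/4)·n^(-1/k) of |P_n(z)| ≤ C·δ^n. -/

import Mathlib

open Complex Real

theorem stmt12 (k : ℝ) (hk : 0 < k) (a : ℕ → ℂ) (P₁ P₂ : ℝ) (hP₁ : 0 < P₁) (hP₂ : 0 < P₂)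
    (ha : ∀ p : ℕ, ‖a p‖ ≤ P₁ * Real.exp (-P₂ * (p : ℝ) ^ (k / (k + 1)))) :
    ∃ C δ : ℝ, 0 < C ∧ 0 < δ ∧ δ < 1 ∧
      ∀ n : ℕ, 1 ≤ n → ∀ z : ℂ, ‖z‖ ≤ 1 + (P₂ / 4) * (n : ℝ) ^ (-(1 : ℝ) / k) →
        ‖∑' p : ℕ, (if (2 : ℝ) ^ (-((k + 1) / k)) * (n : ℝ) ^ ((k + 1) / k) ≤ (p : ℝ) ∧
              (p : ℝ) < (2 : ℝ) ^ (-((k + 1) / k)) * ((n : ℝ) + 1) ^ ((k + 1) / k)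
            then a p * z ^ p else 0)‖ ≤ C * δ ^ n := by
  set s : ℝ := (k + 1) / k with hs_def
  have hs : 0 < s := by positivity
  have hsinv : s⁻¹ = k / (k + 1) := by
    rw [hs_def, inv_div]
  set a0 : ℝ := P₂ / (16 * s) with ha0_def
  have ha0 : 0 < a0 := by positivity
  set B : ℝ := Real.exp (s * (-1 - Real.log a0)) with hB_def
  have hBpos : 0 < B := Real.exp_pos _
  refine ⟨P₁ * (B + 1), Real.exp (-(P₂ / 8)), by positivity, Real.exp_pos _,
    Real.exp_lt_one_iff.2 (by linarith), ?_⟩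
  intro n hn z hz
  have hn1 : (1 : ℝ) ≤ (n : ℝ) := by exact_mod_cast hn
  have hnpos : (0 : ℝ) < (n : ℝ) := by linarith
  set N : ℕ := ⌈(n : ℝ) ^ s⌉₊ with hN_def
  -- key: the upper endpoint is at most n^s
  have hupper : (2 : ℝ) ^ (-s) * ((n : ℝ) + 1) ^ s ≤ (n : ℝ) ^ s := by
    have h1 : ((n : ℝ) + 1) ^ s ≤ (2 * (n : ℝ)) ^ s :=
      Real.rpow_le_rpow (by positivity) (by linarith) hs.le
    have h2 : (2 * (n : ℝ)) ^ s = 2 ^ s * (n : ℝ) ^ s :=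
      Real.mul_rpow (by norm_num) hnpos.le
    have h3 : (2 : ℝ) ^ (-s) * (2 ^ s * (n : ℝ) ^ s) = (n : ℝ) ^ s := by
      rw [← mul_assoc, ← Real.rpow_add (by norm_num : (0:ℝ) < 2)]
      simp
    calc (2 : ℝ) ^ (-s) * ((n : ℝ) + 1) ^ s
        ≤ (2 : ℝ) ^ (-s) * (2 ^ s * (n : ℝ) ^ s) := by
          rw [← h2]
          exact mul_le_mul_of_nonneg_left h1 (by positivity)
      _ = (n : ℝ) ^ s := h3
  -- terms vanish for p ≥ N
  have hvanish : ∀ p : ℕ, p ∉ Finset.range N →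
      (if (2 : ℝ) ^ (-((k + 1) / k)) * (n : ℝ) ^ ((k + 1) / k) ≤ (p : ℝ) ∧
          (p : ℝ) < (2 : ℝ) ^ (-((k + 1) / k)) * ((n : ℝ) + 1) ^ ((k + 1) / k)
        then a p * z ^ p else 0) = 0 := by
    intro p hp
    rw [Finset.mem_range, not_lt] at hp
    rw [if_neg]
    rintro ⟨-, h2⟩
    have hle : (n : ℝ) ^ s ≤ (p : ℝ) := le_trans (Nat.le_ceil _) (by exact_mod_cast hp)
    have : (p : ℝ) < (n : ℝ) ^ s := lt_of_lt_of_le h2 hupper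
    linarith
  have htsum : (∑' p : ℕ, (if (2 : ℝ) ^ (-((k + 1) / k)) * (n : ℝ) ^ ((k + 1) / k) ≤ (p : ℝ) ∧
          (p : ℝ) < (2 : ℝ) ^ (-((k + 1) / k)) * ((n : ℝ) + 1) ^ ((k + 1) / k)
        then a p * z ^ p else 0))
      = ∑ p ∈ Finset.range N, (if (2 : ℝ) ^ (-((k + 1) / k)) * (n : ℝ) ^ ((k + 1) / k) ≤ (p : ℝ) ∧
          (p : ℝ) < (2 : ℝ) ^ (-((k + 1) / k)) * ((n : ℝ) + 1) ^ ((k + 1) / k)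
        then a p * z ^ p else 0) := tsum_eq_sum hvanish
  rw [htsum]
  -- each term bound
  have hterm : ∀ p ∈ Finset.range N,
      ‖(if (2 : ℝ) ^ (-((k + 1) / k)) * (n : ℝ) ^ ((k + 1) / k) ≤ (p : ℝ) ∧
          (p : ℝ) < (2 : ℝ) ^ (-((k + 1) / k)) * ((n : ℝ) + 1) ^ ((k + 1) / k)
        then a p * z ^ p else 0)‖ ≤ P₁ * Real.exp (-(P₂ * n / 4)) := by
    intro p _
    split_ifs with hcond
    · obtain ⟨h1, h2⟩ := hcond
      have hps : (p : ℝ) ≤ (n : ℝ) ^ s := le_of_lt (lt_of_lt_of_le h2 hupper)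
      -- lower bound: p^(1/s) ≥ n/2
      have hlow : (n : ℝ) / 2 ≤ (p : ℝ) ^ s⁻¹ := by
        have h3 : ((2 : ℝ) ^ (-s) * (n : ℝ) ^ s) ^ s⁻¹ ≤ (p : ℝ) ^ s⁻¹ :=
          Real.rpow_le_rpow (by positivity) h1 (by positivity)
        have h4 : ((2 : ℝ) ^ (-s) * (n : ℝ) ^ s) ^ s⁻¹ = (n : ℝ) / 2 := by
          rw [Real.mul_rpow (by positivity) (by positivity),
            ← Real.rpow_mul (by norm_num : (0:ℝ) ≤ 2),
            ← Real.rpow_mul hnpos.le]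
          rw [mul_inv_cancel₀ hs.ne', neg_mul, mul_inv_cancel₀ hs.ne']
          simp [Real.rpow_neg_one]
          ring
        linarith
      have hap : ‖a p‖ ≤ P₁ * Real.exp (-(P₂ * n / 2)) := by
        refine le_trans (ha p) ?_
        have : -P₂ * (p : ℝ) ^ (k / (k + 1)) ≤ -(P₂ * n / 2) := by
          rw [← hsinv]
          nlinarith [hlow]
        exact mul_le_mul_of_nonneg_left (Real.exp_le_exp.2 this) hP₁.le
      have hzp : ‖z ^ p‖ ≤ Real.exp (P₂ * n / 4) := by
        rw [norm_pow]
        set t : ℝ := (P₂ / 4) * (n : ℝ) ^ (-(1 : ℝ) / k) with ht_def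
        have htpos : 0 ≤ t := by positivity
        have hzt : ‖z‖ ^ p ≤ Real.exp t ^ p :=
          pow_le_pow_left₀ (norm_nonneg z)
            (le_trans hz (by linarith [Real.add_one_le_exp t])) p
        have hexp : Real.exp t ^ p = Real.exp (p * t) := by
          rw [← Real.exp_nat_mul]
        have hpt : (p : ℝ) * t ≤ P₂ * n / 4 := by
          have hmul : (p : ℝ) * (n : ℝ) ^ (-(1 : ℝ) / k) ≤ (n : ℝ) := by
            calc (p : ℝ) * (n : ℝ) ^ (-(1 : ℝ) / k)
                ≤ (n : ℝ) ^ s * (n : ℝ) ^ (-(1 : ℝ) / k) :=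
                  mul_le_mul_of_nonneg_right hps (by positivity)
              _ = (n : ℝ) ^ (s + -(1 : ℝ) / k) := (Real.rpow_add hnpos _ _).symm
              _ = (n : ℝ) := by
                  have : s + -(1 : ℝ) / k = 1 := by
                    field_simp [hs_def]
                    rw [hs_def, div_mul_cancel₀ _ hk.ne']; ring
                  rw [this, Real.rpow_one]
          calc (p : ℝ) * t = (P₂ / 4) * ((p : ℝ) * (n : ℝ) ^ (-(1 : ℝ) / k)) := by
                rw [ht_def]; ring
            _ ≤ (P₂ / 4) * (n : ℝ) := mul_le_mul_of_nonneg_left hmul (by positivity)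
            _ = P₂ * n / 4 := by ring
        calc ‖z‖ ^ p ≤ Real.exp t ^ p := hzt
          _ = Real.exp ((p : ℝ) * t) := hexp
          _ ≤ Real.exp (P₂ * n / 4) := Real.exp_le_exp.2 hpt
      calc ‖a p * z ^ p‖ = ‖a p‖ * ‖z ^ p‖ := norm_mul _ _
        _ ≤ (P₁ * Real.exp (-(P₂ * n / 2))) * Real.exp (P₂ * n / 4) :=
            mul_le_mul hap hzp (norm_nonneg _) (by positivity)
        _ = P₁ * Real.exp (-(P₂ * n / 4)) := by
            rw [mul_assoc, ← Real.exp_add]; ring_nf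
    · simp [hP₁.le, (Real.exp_pos _).le, le_of_lt (mul_pos hP₁ (Real.exp_pos _))]
  have hsum : ‖∑ p ∈ Finset.range N, (if (2 : ℝ) ^ (-((k + 1) / k)) * (n : ℝ) ^ ((k + 1) / k) ≤ (p : ℝ) ∧
          (p : ℝ) < (2 : ℝ) ^ (-((k + 1) / k)) * ((n : ℝ) + 1) ^ ((k + 1) / k)
        then a p * z ^ p else 0)‖ ≤ N * (P₁ * Real.exp (-(P₂ * n / 4))) := by
    refine le_trans (norm_sum_le _ _) ?_
    calc ∑ p ∈ Finset.range N, ‖(if (2 : ℝ) ^ (-((k + 1) / k)) * (n : ℝ) ^ ((k + 1) / k) ≤ (p : ℝ) ∧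
            (p : ℝ) < (2 : ℝ) ^ (-((k + 1) / k)) * ((n : ℝ) + 1) ^ ((k + 1) / k)
          then a p * z ^ p else 0)‖
        ≤ ∑ _p ∈ Finset.range N, P₁ * Real.exp (-(P₂ * n / 4)) := Finset.sum_le_sum hterm
      _ = N * (P₁ * Real.exp (-(P₂ * n / 4))) := by
          rw [Finset.sum_const, Finset.card_range, nsmul_eq_mul]
  refine le_trans hsum ?_
  -- bound N
  have hNle : (N : ℝ) ≤ (B + 1) * Real.exp (P₂ * n / 16) := by
    have hceil : (N : ℝ) ≤ (n : ℝ) ^ s + 1 := by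
      have := Nat.ceil_lt_add_one (by positivity : (0:ℝ) ≤ (n : ℝ) ^ s)
      linarith
    have hrpow : (n : ℝ) ^ s ≤ B * Real.exp (P₂ * n / 16) := by
      have hlog : Real.log (n : ℝ) ≤ a0 * n - 1 - Real.log a0 := by
        have h1 : Real.log (a0 * n) ≤ a0 * n - 1 :=
          Real.log_le_sub_one_of_pos (by positivity)
        rw [Real.log_mul ha0.ne' (by positivity)] at h1
        linarith
      have h2 : (n : ℝ) ^ s = Real.exp (Real.log (n : ℝ) * s) :=
        Real.rpow_def_of_pos hnpos s
      rw [h2, hB_def, ← Real.exp_add]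
      apply Real.exp_le_exp.2
      have hsa0 : s * a0 = P₂ / 16 := by
        rw [ha0_def]; field_simp
      have : Real.log (n : ℝ) * s ≤ (a0 * n - 1 - Real.log a0) * s :=
        mul_le_mul_of_nonneg_right hlog hs.le
      nlinarith [this, hsa0]
    have hexp1 : (1 : ℝ) ≤ Real.exp (P₂ * n / 16) :=
      Real.one_le_exp (by positivity)
    nlinarith [hexp1, hceil, hrpow]
  have hfinal : (N : ℝ) * (P₁ * Real.exp (-(P₂ * n / 4)))
      ≤ P₁ * (B + 1) * Real.exp (-(P₂ / 8)) ^ n := by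
    have hd : Real.exp (-(P₂ / 8)) ^ n = Real.exp ((n : ℝ) * -(P₂ / 8)) :=
      (Real.exp_nat_mul _ n).symm
    rw [hd]
    calc (N : ℝ) * (P₁ * Real.exp (-(P₂ * n / 4)))
        ≤ ((B + 1) * Real.exp (P₂ * n / 16)) * (P₁ * Real.exp (-(P₂ * n / 4))) :=
          mul_le_mul_of_nonneg_right hNle (by positivity)
      _ = P₁ * (B + 1) * Real.exp (P₂ * n / 16 + -(P₂ * n / 4)) := by
          rw [Real.exp_add]; ring
      _ ≤ P₁ * (B + 1) * Real.exp ((n : ℝ) * -(P₂ / 8)) := by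
          apply mul_le_mul_of_nonneg_left (Real.exp_le_exp.2 ?_) (by positivity)
          nlinarith [hnpos, hP₂]
  exact hfinal
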